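/- Let (A, E) be an exact category, let M be its admissible monomorphisms, and suppose every object of A embeds via an admissible monomorphism into an M-injective object. If, for an object E and n ≥ 1, there exists an exact sequence of admissible morphisms E ↣ I⁰ → ⋯ → I^{n-1} ↠ I^n with all I^m M-injective, then for every exact sequence of admissible morphisms E ↣ J⁰ → ⋯ → J^{n-1} ↠ F with all J^m M-injective, the object F is M-injective. -/

import Mathlib

open CategoryTheory CategoryTheory.Limits

/-- `(μ, π)` is a kernel-cokernel pair: `μ` is a kernel of `π` and `π` a cokernel of `μ`. -/
def IsKernelCokernelPair {C : Type*} [Category C] [Preadditive C]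
    {X Y Z : C} (μ : X ⟶ Y) (π : Y ⟶ Z) : Prop :=
  ∃ w : μ ≫ π = 0,
    Nonempty (IsLimit (KernelFork.ofι μ w)) ∧ Nonempty (IsColimit (CokernelCofork.ofπ π w))

/-- An exact structure in the sense of Quillen–Bühler: a class of kernel-cokernel pairs,
closed under isomorphisms, satisfying axioms [E0], [E0ᵒᵖ], [E1], [E1ᵒᵖ], [E2], [E2ᵒᵖ]. -/
structure ExactStructure (C : Type*) [Category C] [Preadditive C] where
  /-- the class of kernel-cokernel pairs ("short exact sequences") -/
  E : ∀ ⦃X Y Z : C⦄, (X ⟶ Y) → (Y ⟶ Z) → Prop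
  pair : ∀ ⦃X Y Z : C⦄ ⦃μ : X ⟶ Y⦄ ⦃π : Y ⟶ Z⦄, E μ π → IsKernelCokernelPair μ π
  iso_closed : ∀ ⦃X Y Z X' Y' Z' : C⦄ ⦃μ : X ⟶ Y⦄ ⦃π : Y ⟶ Z⦄ ⦃μ' : X' ⟶ Y'⦄ ⦃π' : Y' ⟶ Z'⦄
      (a : X ≅ X') (b : Y ≅ Y') (c : Z ≅ Z'),
      μ ≫ b.hom = a.hom ≫ μ' → π ≫ c.hom = b.hom ≫ π' → E μ π → E μ' π'
  E0 : ∀ X : C, ∃ (Z : C) (π : X ⟶ Z), E (𝟙 X) π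
  E0op : ∀ X : C, ∃ (W : C) (μ : W ⟶ X), E μ (𝟙 X)
  E1 : ∀ ⦃X Y Z : C⦄ ⦃μ : X ⟶ Y⦄ ⦃ν : Y ⟶ Z⦄,
      (∃ (W : C) (π : Y ⟶ W), E μ π) → (∃ (W : C) (π : Z ⟶ W), E ν π) →
      ∃ (W : C) (π : Z ⟶ W), E (μ ≫ ν) π
  E1op : ∀ ⦃X Y Z : C⦄ ⦃π : X ⟶ Y⦄ ⦃ρ : Y ⟶ Z⦄,
      (∃ (W : C) (μ : W ⟶ X), E μ π) → (∃ (W : C) (μ : W ⟶ Y), E μ ρ) →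
      ∃ (W : C) (μ : W ⟶ X), E μ (π ≫ ρ)
  E2 : ∀ ⦃X Y Z : C⦄ ⦃μ : X ⟶ Y⦄ (f : X ⟶ Z), (∃ (W : C) (π : Y ⟶ W), E μ π) →
      ∃ (P : C) (g : Y ⟶ P) (h : Z ⟶ P) (comm : μ ≫ g = f ≫ h),
        Nonempty (IsColimit (PushoutCocone.mk g h comm)) ∧ ∃ (W : C) (π : P ⟶ W), E h π
  E2op : ∀ ⦃X Y Z : C⦄ ⦃π : Y ⟶ Z⦄ (f : X ⟶ Z), (∃ (W : C) (μ : W ⟶ Y), E μ π) →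
      ∃ (P : C) (g : P ⟶ Y) (h : P ⟶ X) (comm : g ≫ π = h ≫ f),
        Nonempty (IsLimit (PullbackCone.mk g h comm)) ∧ ∃ (W : C) (μ : W ⟶ P), E μ h

variable {C : Type*} [Category C] [Preadditive C]

/-- `μ` is an admissible monomorphism of the exact structure `S`. -/
def AdmMono (S : ExactStructure C) {X Y : C} (μ : X ⟶ Y) : Prop :=
  ∃ (W : C) (π : Y ⟶ W), S.E μ π

/-- `π` is an admissible epimorphism of the exact structure `S`. -/
def AdmEpi (S : ExactStructure C) {Y Z : C} (π : Y ⟶ Z) : Prop :=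
  ∃ (W : C) (μ : W ⟶ Y), S.E μ π

/-- `I` is injective w.r.t. the admissible monomorphisms of `S`. -/
def MInj (S : ExactStructure C) (I : C) : Prop :=
  ∀ ⦃X Y : C⦄ (μ : X ⟶ Y), AdmMono S μ → ∀ f : X ⟶ I, ∃ g : Y ⟶ I, μ ≫ g = f

/-- `P` is projective w.r.t. the admissible epimorphisms of `S`. -/
def PProj (S : ExactStructure C) (P : C) : Prop :=
  ∀ ⦃Y Z : C⦄ (π : Y ⟶ Z), AdmEpi S π → ∀ f : P ⟶ Z, ∃ g : P ⟶ Y, g ≫ π = f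

section Aux

variable {C : Type*} [Category C] [Preadditive C]

/-- `π` is epi when it is a cokernel. -/
lemma epi_of_isCokernel {X Y Z : C} {f : X ⟶ Y} {q : Y ⟶ Z} {w : f ≫ q = 0}
    (h : IsColimit (CokernelCofork.ofπ q w)) : Epi q :=
  ⟨fun u v huv => Cofork.IsColimit.hom_ext h (by simpa using huv)⟩

/-- If `μ` is an admissible mono and `q` is a cokernel of `μ`, then `(μ, q)` is in `E`. -/
lemma E_of_isCokernel (S : ExactStructure C) {X Y Z : C} {μ : X ⟶ Y}
    (hμ : AdmMono S μ) {q : Y ⟶ Z} (w : μ ≫ q = 0)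
    (hq : IsColimit (CokernelCofork.ofπ q w)) : S.E μ q := by
  obtain ⟨W, π, hE⟩ := hμ
  obtain ⟨w0, _, ⟨hc⟩⟩ := S.pair hE
  let e : W ≅ Z := hc.coconePointUniqueUpToIso hq
  have he : π ≫ e.hom = q := by
    simpa using hc.comp_coconePointUniqueUpToIso_hom hq WalkingParallelPair.one
  exact S.iso_closed (Iso.refl X) (Iso.refl Y) e (by simp) (by simpa using he) hE

/-- Splitting data for a short exact sequence whose first term is `M`-injective. -/
lemma split_data (S : ExactStructure C) {A P Q : C} {ι : A ⟶ P} {p : P ⟶ Q}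
    (hE : S.E ι p) (hA : MInj S A) :
    ∃ (r : P ⟶ A) (s : Q ⟶ P), ι ≫ r = 𝟙 A ∧ p ≫ s = 𝟙 P - r ≫ ι ∧
      s ≫ p = 𝟙 Q ∧ s ≫ r = 0 := by
  obtain ⟨w, _, ⟨hc⟩⟩ := S.pair hE
  have hpe : Epi p := epi_of_isCokernel hc
  obtain ⟨r, hr⟩ := hA ι ⟨Q, p, hE⟩ (𝟙 A)
  have h0 : ι ≫ (𝟙 P - r ≫ ι) = 0 := by
    simp [Preadditive.comp_sub, ← Category.assoc, hr]
  obtain ⟨s, hs⟩ := CokernelCofork.IsColimit.desc' hc (𝟙 P - r ≫ ι) h0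
  simp only [Cofork.π_ofπ] at hs
  have hsp : s ≫ p = 𝟙 Q := by
    rw [← cancel_epi p, ← Category.assoc, hs]
    simp [Preadditive.sub_comp, Category.assoc, w]
  have hsr : s ≫ r = 0 := by
    rw [← cancel_epi p, ← Category.assoc, hs]
    simp [Preadditive.sub_comp, Category.assoc, hr]
  exact ⟨r, s, hr, hs, hsp, hsr⟩

/-- M-injectivity passes along retracts. -/
lemma minj_retract (S : ExactStructure C) {P Q : C} (s : Q ⟶ P) (r : P ⟶ Q)
    (hsr : s ≫ r = 𝟙 Q) (hP : MInj S P) : MInj S Q := by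
  intro X Y μ hμ f
  obtain ⟨g, hg⟩ := hP μ hμ (f ≫ s)
  exact ⟨g ≫ r, by rw [← Category.assoc, hg, Category.assoc, hsr, Category.comp_id]⟩

lemma minj_of_iso (S : ExactStructure C) {P Q : C} (e : P ≅ Q) (hP : MInj S P) :
    MInj S Q :=
  minj_retract S e.inv e.hom (by simp) hP

/-- An extension of M-injectives is M-injective. -/
lemma minj_extension (S : ExactStructure C) {A P Q : C} {ι : A ⟶ P} {p : P ⟶ Q}
    (hE : S.E ι p) (hA : MInj S A) (hQ : MInj S Q) : MInj S P := by
  obtain ⟨r, s, hr, hs, _, _⟩ := split_data S hE hA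
  intro X Y μ hμ f
  obtain ⟨a, ha⟩ := hA μ hμ (f ≫ r)
  obtain ⟨b, hb⟩ := hQ μ hμ (f ≫ p)
  refine ⟨a ≫ ι + b ≫ s, ?_⟩
  rw [Preadditive.comp_add, ← Category.assoc, ← Category.assoc, ha, hb,
    Category.assoc, Category.assoc, hs]
  simp [Preadditive.comp_sub]

/-- A quotient of an M-injective by an M-injective is M-injective. -/
lemma minj_quotient (S : ExactStructure C) {A P Q : C} {ι : A ⟶ P} {p : P ⟶ Q}
    (hE : S.E ι p) (hA : MInj S A) (hP : MInj S P) : MInj S Q := by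
  obtain ⟨r, s, _, _, hsp, _⟩ := split_data S hE hA
  exact minj_retract S s p hsp hP

/-- A split short exact sequence identifies the middle with a biproduct. -/
lemma split_iso [HasBinaryBiproducts C] (S : ExactStructure C) {A P Q : C}
    {ι : A ⟶ P} {p : P ⟶ Q} (hE : S.E ι p) (hA : MInj S A) :
    Nonempty (P ≅ A ⊞ Q) := by
  obtain ⟨w, _, _⟩ := S.pair hE
  obtain ⟨r, s, hr, hs, hsp, hsr⟩ := split_data S hE hA
  refine ⟨⟨biprod.lift r p, biprod.desc ι s, ?_, ?_⟩⟩
  · rw [biprod.lift_desc, hs]; abel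
  · ext
    · simp [hr]
    · simp [w]
    · simp [hsr]
    · simp [hsp]

lemma minj_biprod [HasBinaryBiproducts C] (S : ExactStructure C) {A B : C}
    (hA : MInj S A) (hB : MInj S B) : MInj S (A ⊞ B) := by
  intro X Y μ hμ f
  obtain ⟨g1, hg1⟩ := hA μ hμ (f ≫ biprod.fst)
  obtain ⟨g2, hg2⟩ := hB μ hμ (f ≫ biprod.snd)
  refine ⟨biprod.lift g1 g2, ?_⟩
  ext
  · simpa using hg1
  · simpa using hg2

end Aux

section Aux2

variable {C : Type*} [Category C] [Preadditive C]

/-- The pushout of an admissible mono is an admissible mono. -/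
lemma admMono_pushout (S : ExactStructure C) {X Y T Q : C} {μ : X ⟶ Y} {f : X ⟶ T}
    {g : Y ⟶ Q} {h : T ⟶ Q} {comm : μ ≫ g = f ≫ h}
    (hp : IsColimit (PushoutCocone.mk g h comm)) (hμ : AdmMono S μ) : AdmMono S h := by
  obtain ⟨P₂, g₂, h₂, comm₂, ⟨hp₂⟩, W₂, π₂, hE₂⟩ := S.E2 f hμ
  let e := hp₂.coconePointUniqueUpToIso hp
  have he : h₂ ≫ e.hom = h := by
    exact hp₂.comp_coconePointUniqueUpToIso_hom hp WalkingSpan.right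
  exact ⟨W₂, e.inv ≫ π₂,
    S.iso_closed (Iso.refl T) e (Iso.refl W₂) (by simp only [Iso.refl_hom, Category.id_comp]; exact he)
      (by exact (Category.comp_id π₂).trans (e.hom_inv_id_assoc π₂).symm) hE₂⟩

/-- In a pushout square along an admissible mono `μ` with cokernel `q0`, the induced map
out of the pushout is a cokernel of the pushed-forward mono, and forms an `E`-pair with it. -/
lemma pushout_E (S : ExactStructure C) {X Y T Q : C} {μ : X ⟶ Y} {f : X ⟶ T}
    {g : Y ⟶ Q} {h : T ⟶ Q} {comm : μ ≫ g = f ≫ h}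
    (hp : IsColimit (PushoutCocone.mk g h comm)) (hμ : AdmMono S μ)
    {Z : C} {q0 : Y ⟶ Z} (w0 : μ ≫ q0 = 0)
    (hc0 : IsColimit (CokernelCofork.ofπ q0 w0)) :
    ∃ q : Q ⟶ Z, g ≫ q = q0 ∧ ∃ w : h ≫ q = 0, S.E h q := by
  have hq0e : Epi q0 := epi_of_isCokernel hc0
  obtain ⟨q, hq1, hq2⟩ := PushoutCocone.IsColimit.desc' hp q0 0 (by rw [w0, comp_zero])
  simp only [PushoutCocone.mk_inl, PushoutCocone.mk_inr] at hq1 hq2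
  have w : h ≫ q = 0 := hq2
  have hcoker : IsColimit (CokernelCofork.ofπ q w) := by
    refine CokernelCofork.IsColimit.ofπ q w (fun {Z'} t ht => ?_) ?_ ?_
    · refine (CokernelCofork.IsColimit.desc' hc0 (g ≫ t) ?_).1
      exact (Category.assoc _ _ _).symm.trans ((congrArg (· ≫ t) comm).trans
        ((Category.assoc _ _ _).trans ((congrArg (f ≫ ·) ht).trans comp_zero)))
    · intro Z' t ht
      have hfac := (CokernelCofork.IsColimit.desc' hc0 (g ≫ t)
        (by exact (Category.assoc _ _ _).symm.trans ((congrArg (· ≫ t) comm).trans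
          ((Category.assoc _ _ _).trans ((congrArg (f ≫ ·) ht).trans comp_zero))))).2
      simp only [Cofork.π_ofπ] at hfac
      apply PushoutCocone.IsColimit.hom_ext hp
      · simp only [PushoutCocone.mk_inl, ← Category.assoc, hq1]
        exact (Category.assoc _ _ _).symm.trans ((congrArg (· ≫ _) hq1).trans hfac)
      · simp only [PushoutCocone.mk_inr, ← Category.assoc, hq2, w]
        exact (Category.assoc _ _ _).symm.trans ((congrArg (· ≫ _) w).trans (zero_comp.trans ht.symm))
    · intro Z' t ht m hm
      have hfac := (CokernelCofork.IsColimit.desc' hc0 (g ≫ t)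
        (by exact (Category.assoc _ _ _).symm.trans ((congrArg (· ≫ t) comm).trans
          ((Category.assoc _ _ _).trans ((congrArg (f ≫ ·) ht).trans comp_zero))))).2
      simp only [Cofork.π_ofπ] at hfac
      rw [← cancel_epi q0, hfac]
      exact (congrArg (· ≫ m) hq1.symm).trans ((Category.assoc _ _ _).trans (congrArg (g ≫ ·) hm))
  exact ⟨q, hq1, w, E_of_isCokernel S (admMono_pushout S hp hμ) w hcoker⟩

/-- The exact structure yields a zero object. -/
lemma hasZeroObject_of_E (S : ExactStructure C) (X₀ : C) : HasZeroObject C := by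
  obtain ⟨Z, π, hE⟩ := S.E0 X₀
  obtain ⟨w, _, ⟨hc⟩⟩ := S.pair hE
  have hπ : π = 0 := by simpa using w
  have hπe : Epi π := epi_of_isCokernel hc
  refine ⟨Z, (IsZero.iff_id_eq_zero Z).2 ?_⟩
  rw [← cancel_epi π, hπ, zero_comp, zero_comp]

/-- The exact structure yields binary biproducts. -/
lemma hasBinaryBiproducts_of_E (S : ExactStructure C) (X₀ : C) : HasBinaryBiproducts C := by
  haveI : HasZeroObject C := hasZeroObject_of_E S X₀
  have hpair : ∀ X B : C, HasColimit (pair X B) := by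
    intro X B
    obtain ⟨W, μ0, hE0⟩ := S.E0op X
    obtain ⟨w, _, _⟩ := S.pair hE0
    have hμ0 : μ0 = 0 := by simpa using w
    obtain ⟨P, g, h, comm, ⟨hp⟩, _⟩ := S.E2 (0 : W ⟶ B) ⟨X, 𝟙 X, hE0⟩
    have hw : ∀ {T : C} (u : X ⟶ T) (v : B ⟶ T), μ0 ≫ u = (0 : W ⟶ B) ≫ v := by
      intro T u v; rw [hμ0, zero_comp, zero_comp]
    have hcolim : IsColimit (BinaryCofan.mk g h) := by
      refine BinaryCofan.IsColimit.mk _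
        (fun {T} u v => PushoutCocone.IsColimit.desc hp u v (hw u v))
        (fun {T} u v => by
          exact PushoutCocone.IsColimit.inl_desc hp u v (hw u v))
        (fun {T} u v => by
          exact PushoutCocone.IsColimit.inr_desc hp u v (hw u v)) ?_
      intro T u v m hm1 hm2
      apply PushoutCocone.IsColimit.hom_ext hp
      · have h1 : g ≫ PushoutCocone.IsColimit.desc hp u v (hw u v) = u := by
          exact PushoutCocone.IsColimit.inl_desc hp u v (hw u v)
        simp only [PushoutCocone.mk_inl, h1]; exact hm1.trans h1.symm
      · have h2 : h ≫ PushoutCocone.IsColimit.desc hp u v (hw u v) = v := by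
          exact PushoutCocone.IsColimit.inr_desc hp u v (hw u v)
        simp only [PushoutCocone.mk_inr, h2]; exact hm2.trans h2.symm
    exact HasColimit.mk ⟨_, hcolim⟩
  haveI : HasBinaryCoproducts C :=
    ⟨fun F => hasColimit_of_iso (diagramIsoPair F)⟩
  exact HasBinaryBiproducts.of_hasBinaryCoproducts

end Aux2

section Aux3

variable {C : Type*} [Category C] [Preadditive C]

/-- Schanuel's lemma for injectives in an exact category. -/
lemma schanuel [HasBinaryBiproducts C] (S : ExactStructure C)
    {E I X J Y : C} {μ : E ⟶ I} {π : I ⟶ X} {μ' : E ⟶ J} {π' : J ⟶ Y}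
    (h1 : S.E μ π) (h2 : S.E μ' π') (hI : MInj S I) (hJ : MInj S J) :
    Nonempty (J ⊞ X ≅ I ⊞ Y) := by
  have hμ : AdmMono S μ := ⟨X, π, h1⟩
  have hμ' : AdmMono S μ' := ⟨Y, π', h2⟩
  obtain ⟨w1, _, ⟨hc1⟩⟩ := S.pair h1
  obtain ⟨w2, _, ⟨hc2⟩⟩ := S.pair h2
  obtain ⟨P, g, h, comm, ⟨hp⟩, _⟩ := S.E2 μ' hμ
  -- flipped pushout
  have hp' : IsColimit (PushoutCocone.mk h g comm.symm) :=
    ((IsPushout.of_isColimit hp).flip).isColimit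
  obtain ⟨q, hgq, wq, hEq⟩ := pushout_E S hp hμ w1 hc1
  obtain ⟨p, hhp, wp, hEp⟩ := pushout_E S hp' hμ' w2 hc2
  obtain ⟨e1⟩ := split_iso S hEq hJ
  obtain ⟨e2⟩ := split_iso S hEp hI
  exact ⟨e1.symm.trans e2⟩

/-- `E` is stable under adding a biproduct factor on the left of the sequence. -/
lemma E_biprod_right [HasBinaryBiproducts C] (S : ExactStructure C)
    {X Y Z : C} {f : X ⟶ Y} {gq : Y ⟶ Z} (hE : S.E f gq) (B : C) :
    S.E (biprod.map f (𝟙 B)) (biprod.fst ≫ gq) := by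
  obtain ⟨w, _, ⟨hc⟩⟩ := S.pair hE
  have comm : f ≫ biprod.inl = biprod.inl ≫ biprod.map f (𝟙 B) := by simp
  have hp : IsColimit (PushoutCocone.mk (biprod.inl : Y ⟶ Y ⊞ B)
      (biprod.map f (𝟙 B)) comm) := by
    refine PushoutCocone.IsColimit.mk comm
      (fun s => biprod.desc s.inl (biprod.inr ≫ s.inr)) (fun s => by simp) ?_ ?_
    · intro s
      ext
      · have : biprod.inl ≫ biprod.map f (𝟙 B) ≫ biprod.desc s.inl (biprod.inr ≫ s.inr)
            = f ≫ s.inl := by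
          rw [biprod.inl_map_assoc, biprod.inl_desc]
        rw [this, s.condition]
      · have : biprod.inr ≫ biprod.map f (𝟙 B) ≫ biprod.desc s.inl (biprod.inr ≫ s.inr)
            = biprod.inr ≫ s.inr := by
          rw [biprod.inr_map_assoc, Category.id_comp, biprod.inr_desc]
        rw [this]
    · intro s m hm1 hm2
      ext
      · rw [biprod.inl_desc]
        simpa using hm1
      · rw [biprod.inr_desc]
        have h2 := congrArg (fun t => (biprod.inr : B ⟶ X ⊞ B) ≫ t) hm2
        simpa using h2
  obtain ⟨q, hq1, wq, hEq⟩ := pushout_E S hp ⟨Z, gq, hE⟩ w hc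
  have hq : q = biprod.fst ≫ gq := by
    apply biprod.hom_ext'
    · rw [hq1]; simp
    · have : (biprod.inr : B ⟶ Y ⊞ B) ≫ q = 0 := by
        have h1 : (biprod.inr : B ⟶ X ⊞ B) ≫ biprod.map f (𝟙 B) = biprod.inr := by simp
        rw [← h1, Category.assoc, wq, comp_zero]
      rw [this]; simp
  exact hq ▸ hEq

/-- `E` is stable under adding a biproduct factor (second-factor version). -/
lemma E_biprod_left [HasBinaryBiproducts C] (S : ExactStructure C)
    {X Y Z : C} {f : X ⟶ Y} {gq : Y ⟶ Z} (hE : S.E f gq) (B : C) :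
    S.E (biprod.map (𝟙 B) f) (biprod.snd ≫ gq) := by
  have h := E_biprod_right S hE B
  refine S.iso_closed (biprod.braiding X B) (biprod.braiding Y B) (Iso.refl Z) ?_ ?_ h
  · ext <;> simp
  · ext <;> simp

/-- The "stable equivalence" relation between cosyzygies. -/
def StEq [HasBinaryBiproducts C] (S : ExactStructure C) (X Y : C) : Prop :=
  ∃ U V : C, MInj S U ∧ MInj S V ∧ Nonempty (U ⊞ X ≅ V ⊞ Y)

lemma stEq_propagate [HasBinaryBiproducts C] (S : ExactStructure C)
    {X Y X2 Y2 I1 J1 : C} {ν : X ⟶ I1} {ρ : I1 ⟶ X2} {ν' : Y ⟶ J1} {ρ' : J1 ⟶ Y2}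
    (hR : StEq S X Y) (h1 : S.E ν ρ) (hI1 : MInj S I1)
    (h2 : S.E ν' ρ') (hJ1 : MInj S J1) : StEq S X2 Y2 := by
  obtain ⟨U, V, hU, hV, ⟨e⟩⟩ := hR
  have hA : S.E (biprod.map (𝟙 U) ν) (biprod.snd ≫ ρ) := E_biprod_left S h1 U
  have hB : S.E (biprod.map (𝟙 V) ν') (biprod.snd ≫ ρ') := E_biprod_left S h2 V
  have hB' : S.E (e.hom ≫ biprod.map (𝟙 V) ν') (biprod.snd ≫ ρ') :=
    S.iso_closed e.symm (Iso.refl _) (Iso.refl _) (by simp) (by simp) hB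
  obtain ⟨e2⟩ := schanuel S hA hB' (minj_biprod S hU hI1) (minj_biprod S hV hJ1)
  exact ⟨V ⊞ J1, U ⊞ I1, minj_biprod S hV hJ1, minj_biprod S hU hI1, ⟨e2⟩⟩

lemma stEq_transfer [HasBinaryBiproducts C] (S : ExactStructure C)
    {X Y : C} (hR : StEq S X Y) (hX : MInj S X) : MInj S Y := by
  obtain ⟨U, V, hU, _, ⟨e⟩⟩ := hR
  have h1 : MInj S (U ⊞ X) := minj_biprod S hU hX
  have h2 : MInj S (V ⊞ Y) := minj_of_iso S e h1
  exact minj_retract S biprod.inr biprod.snd (by simp) h2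

end Aux3

/-- The injective dimension theorem, (ii) ⇒ (i): in an exact category with enough
injectives, an exact sequence of admissible morphisms
`E ↣ J⁰ → ⋯ → J^{n-1} ↠ F` is encoded by pairs `(μ j : G j ⟶ J j, π j : J j ⟶ G (j+1))`
in the exact structure for `j < n`, with `G 0 = E` and `G n` the final object; the
admissible morphisms of the sequence are `π j ≫ μ (j+1)`.  If `E` admits such a
sequence with all `J j` (`j < n`) and the final object `G n` injective, then for every
such sequence starting at `E` with all `J' j` injective, the final object `G' n` is
injective. -/
theorem stmt19 (S : ExactStructure C) (n : ℕ) (hn : 1 ≤ n)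
    (henough : ∀ X : C, ∃ (I : C) (f : X ⟶ I), MInj S I ∧ AdmMono S f)
    (G J : ℕ → C) (μ : ∀ j, G j ⟶ J j) (π : ∀ j, J j ⟶ G (j + 1))
    (hpairs : ∀ j < n, S.E (μ j) (π j))
    (hinj : ∀ j < n, MInj S (J j)) (hlast : MInj S (G n))
    (G' J' : ℕ → C) (μ' : ∀ j, G' j ⟶ J' j) (π' : ∀ j, J' j ⟶ G' (j + 1))
    (hstart : G' 0 = G 0)
    (hpairs' : ∀ j < n, S.E (μ' j) (π' j))
    (hinj' : ∀ j < n, MInj S (J' j)) :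
    MInj S (G' n) := by
  haveI : HasBinaryBiproducts C := hasBinaryBiproducts_of_E S (G 0)
  have key : ∀ j, j ≤ n → StEq S (G j) (G' j) := by
    intro j
    induction j with
    | zero =>
      intro _
      obtain ⟨U, _, hU, _⟩ := henough (G 0)
      exact ⟨U, U, hU, hU, ⟨biprod.mapIso (Iso.refl U) (eqToIso hstart).symm⟩⟩
    | succ j ih =>
      intro hj
      have hjn : j < n := Nat.lt_of_succ_le hj
      exact stEq_propagate S (ih (Nat.le_of_lt hjn)) (hpairs j hjn) (hinj j hjn)
        (hpairs' j hjn) (hinj' j hjn)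
  exact stEq_transfer S (key n le_rfl) hlast
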